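/- (Generalized Walsh theorem, part 2) Let D ⊆ ℂ be a circular domain, let q be a monic complex polynomial of degree d ≥ 1, and let f be a complex polynomial of degree exactly n ≥ 1 that does not vanish at any point of q(D). Then T_{q,n}(f) does not vanish at any point of q_∘(D), and S_{q,n}(f)(u₁,…,uₙ) ≠ 0 for all (u₁,…,uₙ) ∈ (q_∘(D))ⁿ. -/

import Mathlib

open Polynomial

/-- The apolarity form `[f,g]_m`. -/
noncomputable def apol (m : ℕ) (f g : Polynomial ℂ) : ℂ :=
  ∑ k ∈ Finset.range (m + 1),
    (-1 : ℂ) ^ k * ((m.choose k : ℂ))⁻¹ * f.coeff k * g.coeff (m - k)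

/-- The symmetrization `Sym_N(f)` of a polynomial, as a function on `ι → ℂ`
with `N = card ι`. -/
noncomputable def symFun {ι : Type*} [Fintype ι] (f : Polynomial ℂ) (y : ι → ℂ) : ℂ :=
  ∑ k ∈ Finset.range (Fintype.card ι + 1),
    (((Fintype.card ι).choose k : ℂ))⁻¹ * f.coeff k *
      MvPolynomial.eval y (MvPolynomial.esymm ι ℂ k)

/-- A circular domain: an open or closed disk or half-plane, or a complement thereof. -/
def IsCircularDomain (D : Set ℂ) : Prop :=
  ∃ (α γ : ℝ) (β : ℂ),
    D = {z : ℂ | α * Complex.normSq z + ((starRingEnd ℂ) β * z).re + γ < 0} ∨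
    D = {z : ℂ | α * Complex.normSq z + ((starRingEnd ℂ) β * z).re + γ ≤ 0}

/-- `q_∘(D) = {u : q⁻¹(u) ⊆ D}`. -/
def innerImage (q : Polynomial ℂ) (D : Set ℂ) : Set ℂ :=
  {u : ℂ | ∀ z : ℂ, q.eval z = u → z ∈ D}

/-- `S_{q,n}(f)(u₁,…,uₙ) = [f∘q, ∏ⱼ (q - uⱼ)]_{nd}`. -/
noncomputable def Sfun (q : Polynomial ℂ) (n : ℕ) (f : Polynomial ℂ) (u : Fin n → ℂ) : ℂ :=
  apol (n * q.natDegree) (f.comp q) (∏ j, (q - Polynomial.C (u j)))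

/-- The Fischer inner product `⟨f,g⟩_n`. -/
noncomputable def fischer (n : ℕ) (f g : Polynomial ℂ) : ℂ :=
  ∑ k ∈ Finset.range (n + 1),
    ((n.choose k : ℂ))⁻¹ * f.coeff k * (starRingEnd ℂ) (g.coeff k)


section walshAux

/-- `ltb true x` means `x < 0`; `ltb false x` means `x ≤ 0`. -/
def ltb (b : Bool) (x : ℝ) : Prop := if b then x < 0 else x ≤ 0

lemma not_ltb_iff (b : Bool) (x : ℝ) : ¬ ltb b x ↔ ltb (!b) (-x) := by
  cases b <;> simp [ltb] <;> constructor <;> intro h <;> linarith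

lemma ltb_of_le {b : Bool} {x y : ℝ} (h : x ≤ y) (hy : ltb b y) : ltb b x := by
  cases b <;> simp [ltb] at * <;> linarith

lemma ltb_mul_pos {b : Bool} {c x : ℝ} (hc : 0 < c) (hx : ltb b x) : ltb b (c * x) := by
  cases b <;> simp [ltb] at *
  · exact mul_nonpos_of_nonneg_of_nonpos hc.le hx
  · exact mul_neg_of_pos_of_neg hc hx

lemma ltb_of_mul_pos {b : Bool} {c x : ℝ} (hc : 0 < c) (hx : ltb b (c * x)) : ltb b x := by
  cases b <;> simp [ltb] at *
  · nlinarith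
  · nlinarith

lemma nonneg_of_not_ltb {b : Bool} {x : ℝ} (h : ¬ ltb b x) : 0 ≤ x := by
  cases b <;> simp [ltb] at h <;> linarith

lemma ltb_sum {b : Bool} (s : Multiset ℝ) (hs : s ≠ 0) (h : ∀ x ∈ s, ltb b x) :
    ltb b s.sum := by
  induction s using Multiset.induction with
  | empty => exact absurd rfl hs
  | cons a t ih =>
    rcases eq_or_ne t 0 with rfl | ht
    · simpa using h a (by simp)
    · have h1 := h a (by simp)
      have h2 := ih ht (fun x hx => h x (Multiset.mem_cons_of_mem hx))
      rw [Multiset.sum_cons]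
      cases b <;> simp [ltb] at * <;> linarith

/-- The defining real quadratic of a circular domain. -/
noncomputable def hfun (α : ℝ) (β : ℂ) (γ : ℝ) (z : ℂ) : ℝ :=
  α * Complex.normSq z + ((starRingEnd ℂ) β * z).re + γ

lemma key_id (α γ : ℝ) (β w z : ℂ) :
    hfun α β γ w - ((2 * (α : ℂ) * w + β) * (starRingEnd ℂ) (w - z)).re
      + α * Complex.normSq (w - z) = hfun α β γ z := by
  simp only [hfun, Complex.normSq_apply, Complex.mul_re, Complex.mul_im, Complex.sub_re,
    Complex.sub_im, Complex.add_re, Complex.add_im, Complex.conj_re, Complex.conj_im,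
    Complex.ofReal_re, Complex.ofReal_im, Complex.re_ofNat, Complex.im_ofNat]
  push_cast
  ring

lemma normSq_sum_le (s : Multiset ℂ) :
    Complex.normSq s.sum ≤ (Multiset.card s : ℝ) * (s.map Complex.normSq).sum := by
  induction s using Multiset.induction with
  | empty => simp
  | cons a t ih =>
    have hQ : (0:ℝ) ≤ (t.map Complex.normSq).sum := by
      apply Multiset.sum_nonneg
      intro x hx
      obtain ⟨z, _, rfl⟩ := Multiset.mem_map.mp hx
      exact Complex.normSq_nonneg z
    rw [Multiset.sum_cons, Multiset.card_cons, Multiset.map_cons, Multiset.sum_cons]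
    have hadd : Complex.normSq (a + t.sum)
        = Complex.normSq a + Complex.normSq t.sum + 2 * (a * (starRingEnd ℂ) t.sum).re :=
      Complex.normSq_add a t.sum
    have habs : (a * (starRingEnd ℂ) t.sum).re ≤ ‖a‖ * ‖t.sum‖ := by
      calc (a * (starRingEnd ℂ) t.sum).re ≤ ‖a * (starRingEnd ℂ) t.sum‖ :=
            Complex.re_le_norm _
        _ = ‖a‖ * ‖t.sum‖ := by rw [norm_mul, Complex.norm_conj]
    have h1 : Complex.normSq a = ‖a‖ ^ 2 := (Complex.sq_norm a).symm
    have h2 : Complex.normSq t.sum = ‖t.sum‖ ^ 2 := (Complex.sq_norm _).symm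
    have hx : (0:ℝ) ≤ ‖a‖ := norm_nonneg _
    have hy : (0:ℝ) ≤ ‖t.sum‖ := norm_nonneg _
    have hn : (0:ℝ) ≤ (Multiset.card t : ℝ) := Nat.cast_nonneg _
    set x := ‖a‖
    set y := ‖t.sum‖
    set n := (Multiset.card t : ℝ)
    set Q := (t.map Complex.normSq).sum
    have ih' : y ^ 2 ≤ n * Q := by rw [← h2]; exact ih
    rw [hadd, h1, h2]
    have hc : ((Multiset.card t + 1 : ℕ) : ℝ) = n + 1 := by push_cast; rfl
    rw [hc]
    have h3 : 2 * (a * (starRingEnd ℂ) t.sum).re ≤ 2 * (x * y) := by linarith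
    rcases eq_or_ne t 0 with rfl | ht
    · simp only [Multiset.sum_zero, map_zero] at *
      have : y = 0 := by simp [y]
      nlinarith
    · have hn1 : (1:ℝ) ≤ n := by
        have h0 : 0 < Multiset.card t := Multiset.card_pos.mpr ht
        have h0' : (1:ℝ) ≤ (Multiset.card t : ℝ) := by exact_mod_cast h0
        simpa [n] using h0'
      nlinarith [sq_nonneg (n * x - y), mul_nonneg (by linarith : (0:ℝ) ≤ n + 1)
        (by linarith : (0:ℝ) ≤ n * Q - y ^ 2), mul_pos (by linarith : (0:ℝ) < n)
        (by nlinarith : (0:ℝ) < 1)]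

lemma re_mul_sum (bb : ℂ) (s : Multiset ℂ) :
    (s.map (fun z => (bb * z).re)).sum = (bb * s.sum).re := by
  induction s using Multiset.induction with
  | empty => simp
  | cons a t ih =>
      rw [Multiset.map_cons, Multiset.sum_cons, Multiset.sum_cons, mul_add, Complex.add_re, ih]

lemma jensen (c : ℝ) (hc : 0 ≤ c) (bb : ℂ) (a : ℝ) (s : Multiset ℂ) (hs : s ≠ 0) :
    (Multiset.card s : ℝ) * hfun c bb a (((Multiset.card s : ℕ) : ℂ)⁻¹ * s.sum)
      ≤ (s.map (hfun c bb a)).sum := by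
  have hm : 0 < Multiset.card s := Multiset.card_pos.mpr hs
  have hmR : (0:ℝ) < (Multiset.card s : ℝ) := by exact_mod_cast hm
  set m := Multiset.card s with hmdef
  set Ss := s.sum with hSs
  have hcast : ((m : ℕ) : ℂ)⁻¹ = ((((m:ℕ):ℝ))⁻¹ : ℝ) := by push_cast; rfl
  have e1 : Complex.normSq (((m : ℕ) : ℂ)⁻¹ * Ss)
      = ((m:ℝ))⁻¹ * ((m:ℝ))⁻¹ * Complex.normSq Ss := by
    rw [map_mul, hcast, Complex.normSq_ofReal]
  have e2 : ((starRingEnd ℂ) bb * (((m : ℕ) : ℂ)⁻¹ * Ss)).re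
      = ((m:ℝ))⁻¹ * ((starRingEnd ℂ) bb * Ss).re := by
    rw [hcast]
    have h4 : (starRingEnd ℂ) bb * ((↑((m:ℝ)⁻¹) : ℂ) * Ss)
        = (↑((m:ℝ)⁻¹) : ℂ) * ((starRingEnd ℂ) bb * Ss) := by ring
    rw [h4, Complex.re_ofReal_mul]
  have e3 : (s.map (hfun c bb a)).sum
      = c * (s.map Complex.normSq).sum + ((starRingEnd ℂ) bb * Ss).re + (m:ℝ) * a := by
    unfold hfun
    rw [Multiset.sum_map_add, Multiset.sum_map_add]
    rw [Multiset.sum_map_mul_left, re_mul_sum]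
    simp [Multiset.map_const', Multiset.sum_replicate, nsmul_eq_mul, hmdef, hSs]
  rw [e3]
  simp only [hfun, e1, e2]
  set NS := Complex.normSq Ss with hNS
  set Qs := (Multiset.map (⇑Complex.normSq) s).sum with hQs
  set R := ((starRingEnd ℂ) bb * Ss).re with hR
  have key : NS ≤ (m:ℝ) * Qs := normSq_sum_le s
  have hne : ((m:ℕ):ℝ) ≠ 0 := ne_of_gt hmR
  have expand : (m:ℝ) * (c * (((m:ℝ))⁻¹ * ((m:ℝ))⁻¹ * NS) + ((m:ℝ))⁻¹ * R + a)
      = c * (((m:ℝ))⁻¹ * NS) + R + (m:ℝ) * a := by field_simp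
  rw [expand]
  have h2 : ((m:ℝ))⁻¹ * (c * NS) ≤ ((m:ℝ))⁻¹ * (c * ((m:ℝ) * Qs)) :=
    mul_le_mul_of_nonneg_left (mul_le_mul_of_nonneg_left key hc) (inv_nonneg.mpr hmR.le)
  have h3 : ((m:ℝ))⁻¹ * (c * ((m:ℝ) * Qs)) = c * Qs := by field_simp
  rw [h3] at h2
  nlinarith [h2]

lemma hq_eval (α γ : ℝ) (β : ℂ) (w z : ℂ) (hzw : z ≠ w) :
    hfun (hfun α β γ w) (-(starRingEnd ℂ) (2 * (α:ℂ) * w + β)) α ((w - z)⁻¹)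
      = (Complex.normSq (w - z))⁻¹ * hfun α β γ z := by
  have hwz : w - z ≠ 0 := sub_ne_zero.mpr (Ne.symm hzw)
  have hN : Complex.normSq (w - z) ≠ 0 := by simpa using hwz
  have hinv : (w - z)⁻¹ = ((Complex.normSq (w - z))⁻¹ : ℝ) * (starRingEnd ℂ) (w - z) := by
    rw [Complex.inv_def]; push_cast; ring
  have hkey := key_id α γ β w z
  have e1 : Complex.normSq ((w - z)⁻¹) = (Complex.normSq (w - z))⁻¹ := Complex.normSq_inv _
  have e2 : ((starRingEnd ℂ) (-(starRingEnd ℂ) (2 * (α:ℂ) * w + β)) * (w - z)⁻¹).re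
      = -((Complex.normSq (w - z))⁻¹
          * ((2 * (α:ℂ) * w + β) * (starRingEnd ℂ) (w - z)).re) := by
    rw [map_neg, Complex.conj_conj, hinv]
    have h3 : -(2 * (α:ℂ) * w + β) * (((Complex.normSq (w - z))⁻¹ : ℝ) * (starRingEnd ℂ) (w - z))
        = (((Complex.normSq (w - z))⁻¹ : ℝ) : ℂ)
            * (-((2 * (α:ℂ) * w + β) * (starRingEnd ℂ) (w - z))) := by ring
    rw [h3, Complex.re_ofReal_mul, Complex.neg_re]
    ring
  have h5 : Complex.normSq (w - z) * (Complex.normSq (w - z))⁻¹ = 1 := mul_inv_cancel₀ hN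
  simp only [hfun] at hkey ⊢
  rw [e1, e2]
  linear_combination (Complex.normSq (w - z))⁻¹ * hkey - α * h5

lemma conv_lemma (α γ : ℝ) (β : ℂ) (b : Bool) (w ζ : ℂ)
    (hw : ¬ ltb b (hfun α β γ w)) (s : Multiset ℂ) (hs : s ≠ 0)
    (hmem : ∀ z ∈ s, z ≠ w ∧ ltb b (hfun α β γ z))
    (heq : ((Multiset.card s : ℕ) : ℂ) = (w - ζ) * (s.map (fun z => (w - z)⁻¹)).sum) :
    ltb b (hfun α β γ ζ) := by
  have hm : 0 < Multiset.card s := Multiset.card_pos.mpr hs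
  have hmC : ((Multiset.card s : ℕ) : ℂ) ≠ 0 := by exact_mod_cast hm.ne'
  have hwζ : w - ζ ≠ 0 := by
    intro h0
    rw [h0, zero_mul] at heq
    exact hmC heq
  have hζw : ζ ≠ w := fun h => hwζ (by rw [h, sub_self])
  set s' := s.map (fun z => (w - z)⁻¹) with hs'
  have hs'0 : s' ≠ 0 := by
    rw [hs', Ne, Multiset.map_eq_zero]
    exact hs
  have hcard' : Multiset.card s' = Multiset.card s := Multiset.card_map _ _
  have hS : s'.sum ≠ 0 := by
    intro h0
    rw [h0, mul_zero] at heq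
    exact hmC heq
  have hsum : ((Multiset.card s : ℕ) : ℂ)⁻¹ * s'.sum = (w - ζ)⁻¹ := by
    rw [heq]
    rw [mul_inv, mul_assoc, inv_mul_cancel₀ hS, mul_one]
  have hc : 0 ≤ hfun α β γ w := nonneg_of_not_ltb hw
  have hj := jensen (hfun α β γ w) hc (-(starRingEnd ℂ) (2 * (α:ℂ) * w + β)) α s' hs'0
  rw [hcard', hsum] at hj
  set Hq := hfun (hfun α β γ w) (-(starRingEnd ℂ) (2 * (α:ℂ) * w + β)) α with hHq
  have hRHS : ltb b ((s'.map Hq).sum) := by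
    apply ltb_sum
    · rw [Ne, Multiset.map_eq_zero]
      exact hs'0
    · intro x hx
      obtain ⟨y, hy, rfl⟩ := Multiset.mem_map.mp hx
      obtain ⟨z, hz, rfl⟩ := Multiset.mem_map.mp hy
      obtain ⟨hzw, hzK⟩ := hmem z hz
      have hNpos : 0 < (Complex.normSq (w - z))⁻¹ := by
        apply inv_pos.mpr
        have : w - z ≠ 0 := sub_ne_zero.mpr (Ne.symm hzw)
        exact Complex.normSq_pos.mpr this
      rw [hHq, hq_eval α γ β w z hzw]
      exact ltb_mul_pos hNpos hzK
  have h6 : ltb b ((Multiset.card s : ℝ) * Hq ((w - ζ)⁻¹)) := ltb_of_le hj hRHS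
  have h7 : ltb b (Hq ((w - ζ)⁻¹)) := by
    apply ltb_of_mul_pos _ h6
    exact_mod_cast hm
  rw [hHq, hq_eval α γ β w ζ hζw] at h7
  have hNζ : 0 < Complex.normSq (w - ζ) := Complex.normSq_pos.mpr hwζ
  have h8 := ltb_mul_pos hNζ h7
  have h9 : Complex.normSq (w - ζ) * ((Complex.normSq (w - ζ))⁻¹ * hfun α β γ ζ)
      = hfun α β γ ζ := by
    field_simp
  rwa [h9] at h8

lemma eval_derivative_msprod (w : ℂ) (s : Multiset ℂ) (hw : ∀ z ∈ s, z ≠ w) :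
    Polynomial.eval w (Polynomial.derivative (s.map (fun z => X - C z)).prod)
      = Polynomial.eval w (s.map (fun z => X - C z)).prod
        * (s.map (fun z => (w - z)⁻¹)).sum := by
  induction s using Multiset.induction with
  | empty => simp
  | cons a t ih =>
    have ha : a ≠ w := hw a (Multiset.mem_cons_self a t)
    have ht : ∀ z ∈ t, z ≠ w := fun z hz => hw z (Multiset.mem_cons_of_mem hz)
    have hwa : w - a ≠ 0 := sub_ne_zero.mpr (Ne.symm ha)
    simp only [Multiset.map_cons, Multiset.prod_cons, Multiset.sum_cons, derivative_mul,
      eval_add, eval_mul, eval_sub, eval_X, eval_C, derivative_sub, derivative_X, derivative_C,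
      eval_one, sub_zero, eval_one]
    rw [ih ht]
    field_simp

lemma polar_coeff (m : ℕ) (P : Polynomial ℂ) (ζ : ℂ) (k : ℕ) :
    (C ((m:ℕ):ℂ) * P + (C ζ - X) * Polynomial.derivative P).coeff k
      = (((m:ℕ):ℂ) - (k:ℂ)) * P.coeff k + ((k:ℂ) + 1) * ζ * P.coeff (k + 1) := by
  rw [coeff_add, coeff_C_mul, sub_mul, coeff_sub, coeff_C_mul, coeff_derivative]
  cases k with
  | zero => rw [coeff_X_mul_zero]; push_cast; ring
  | succ k' =>
    rw [coeff_X_mul, coeff_derivative]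
    push_cast
    ring

lemma choose_eq1 (M k : ℕ) (hk : k ≤ M) :
    (((M+1:ℕ):ℂ))⁻¹ * ((M.choose k : ℂ))⁻¹ * ((((M+1):ℕ):ℂ) - (k:ℂ))
      = (((M+1).choose k : ℂ))⁻¹ := by
  have h0 : M.choose k * (M+1) = (M+1).choose k * (M + 1 - k) := Nat.choose_mul_succ_eq M k
  have h1 : ((M.choose k : ℂ)) * (((M+1):ℕ):ℂ) = (((M+1).choose k : ℂ)) * ((((M+1):ℕ):ℂ) - (k:ℂ)) := by
    have h2 : (((M + 1 - k : ℕ)):ℂ) = (((M+1):ℕ):ℂ) - (k:ℂ) := by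
      push_cast [Nat.cast_sub (by omega : k ≤ M + 1)]
      rfl
    rw [← h2]
    exact_mod_cast congrArg (Nat.cast : ℕ → ℂ) h0
  have hc1 : ((M.choose k : ℂ)) ≠ 0 := Nat.cast_ne_zero.mpr (Nat.choose_pos hk).ne'
  have hc2 : (((M+1).choose k : ℂ)) ≠ 0 := Nat.cast_ne_zero.mpr (Nat.choose_pos (by omega)).ne'
  have hm : (((M+1):ℕ):ℂ) ≠ 0 := Nat.cast_ne_zero.mpr (by omega)
  have hprod : (((M+1):ℕ):ℂ) * ((M.choose k : ℂ)) ≠ 0 := mul_ne_zero hm hc1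
  rw [show (((M+1:ℕ):ℂ))⁻¹ * ((M.choose k : ℂ))⁻¹ * ((((M+1):ℕ):ℂ) - (k:ℂ))
      = ((((M+1):ℕ):ℂ) - (k:ℂ)) / ((((M+1):ℕ):ℂ) * ((M.choose k : ℂ))) from by ring]
  rw [inv_eq_one_div, div_eq_div_iff hprod hc2]
  linear_combination -h1

lemma choose_eq2 (M k : ℕ) (hk : k ≤ M) :
    (((M+1:ℕ):ℂ))⁻¹ * ((M.choose k : ℂ))⁻¹ * ((k:ℂ) + 1)
      = (((M+1).choose (k+1) : ℂ))⁻¹ := by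
  have h0 : (M+1) * M.choose k = (M+1).choose (k+1) * (k+1) := Nat.add_one_mul_choose_eq M k
  have h1 : (((M+1):ℕ):ℂ) * ((M.choose k : ℂ)) = (((M+1).choose (k+1) : ℂ)) * ((k:ℂ) + 1) := by
    exact_mod_cast congrArg (Nat.cast : ℕ → ℂ) h0
  have hc1 : ((M.choose k : ℂ)) ≠ 0 := Nat.cast_ne_zero.mpr (Nat.choose_pos hk).ne'
  have hc2 : (((M+1).choose (k+1) : ℂ)) ≠ 0 :=
    Nat.cast_ne_zero.mpr (Nat.choose_pos (by omega)).ne'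
  have hm : (((M+1):ℕ):ℂ) ≠ 0 := Nat.cast_ne_zero.mpr (by omega)
  have hprod : (((M+1):ℕ):ℂ) * ((M.choose k : ℂ)) ≠ 0 := mul_ne_zero hm hc1
  rw [show (((M+1:ℕ):ℂ))⁻¹ * ((M.choose k : ℂ))⁻¹ * ((k:ℂ) + 1)
      = ((k:ℂ) + 1) / ((((M+1):ℕ):ℂ) * ((M.choose k : ℂ))) from by ring]
  rw [inv_eq_one_div, div_eq_div_iff hprod hc2]
  linear_combination -h1

lemma apol_reduce (M : ℕ) (P R : Polynomial ℂ) (ζ : ℂ)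
    (hRc : ∀ j, M + 1 ≤ j → R.coeff j = 0) :
    apol (M+1) P ((X - C ζ) * R)
      = ((((M+1):ℕ):ℂ))⁻¹
        * apol M (C (((M+1):ℕ):ℂ) * P + (C ζ - X) * Polynomial.derivative P) R := by
  set A : ℂ := ∑ k ∈ Finset.range (M+1),
    (-1:ℂ)^k * (((M+1).choose k : ℂ))⁻¹ * P.coeff k * R.coeff (M-k) with hA
  set B : ℂ := ∑ k ∈ Finset.range (M+1),
    (-1:ℂ)^k * (((M+1).choose (k+1) : ℂ))⁻¹ * P.coeff (k+1) * R.coeff (M-k) with hB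
  have hco : ∀ j, ((X - C ζ) * R).coeff j = (X * R).coeff j - ζ * R.coeff j := by
    intro j
    rw [sub_mul, coeff_sub, coeff_C_mul]
  have hL : apol (M+1) P ((X - C ζ) * R) = A + ζ * B := by
    simp only [apol]
    have e1 : ∀ k ∈ Finset.range (M+2),
        (-1:ℂ)^k * (((M+1).choose k : ℂ))⁻¹ * P.coeff k * ((X - C ζ) * R).coeff (M+1-k)
        = (-1:ℂ)^k * (((M+1).choose k : ℂ))⁻¹ * P.coeff k * (X*R).coeff (M+1-k)
          - ζ * ((-1:ℂ)^k * (((M+1).choose k : ℂ))⁻¹ * P.coeff k * R.coeff (M+1-k)) := by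
      intro k _
      rw [hco]
      ring
    rw [Finset.sum_congr rfl e1, Finset.sum_sub_distrib, ← Finset.mul_sum]
    have hS1 : ∑ k ∈ Finset.range (M+2),
        (-1:ℂ)^k * (((M+1).choose k : ℂ))⁻¹ * P.coeff k * (X*R).coeff (M+1-k) = A := by
      rw [Finset.sum_range_succ]
      have hz : M + 1 - (M+1) = 0 := by omega
      rw [hz, coeff_X_mul_zero, mul_zero, add_zero, hA]
      apply Finset.sum_congr rfl
      intro k hk
      have hkM : k ≤ M := by simpa [Nat.lt_succ_iff] using hk
      have h2 : M + 1 - k = (M - k) + 1 := by omega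
      rw [h2, coeff_X_mul]
    have hS2 : ∑ k ∈ Finset.range (M+2),
        (-1:ℂ)^k * (((M+1).choose k : ℂ))⁻¹ * P.coeff k * R.coeff (M+1-k) = -B := by
      rw [Finset.sum_range_succ']
      have hz : R.coeff (M+1) = 0 := hRc (M+1) le_rfl
      simp only [Nat.succ_sub_succ_eq_sub, Nat.sub_zero, hz, mul_zero, add_zero]
      rw [hB, ← Finset.sum_neg_distrib]
      apply Finset.sum_congr rfl
      intro k hk
      have : (-1:ℂ)^(k+1) = -((-1:ℂ)^k) := by ring
      rw [this]
      ring
    rw [hS1, hS2]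
    ring
  have hR' : ((((M+1):ℕ):ℂ))⁻¹
      * apol M (C (((M+1):ℕ):ℂ) * P + (C ζ - X) * Polynomial.derivative P) R = A + ζ * B := by
    simp only [apol]
    rw [Finset.mul_sum]
    have e2 : ∀ k ∈ Finset.range (M+1),
        ((((M+1):ℕ):ℂ))⁻¹ * ((-1:ℂ)^k * ((M.choose k : ℂ))⁻¹
          * (C (((M+1):ℕ):ℂ) * P + (C ζ - X) * Polynomial.derivative P).coeff k
          * R.coeff (M-k))
        = (-1:ℂ)^k * (((M+1).choose k : ℂ))⁻¹ * P.coeff k * R.coeff (M-k)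
          + ζ * ((-1:ℂ)^k * (((M+1).choose (k+1) : ℂ))⁻¹ * P.coeff (k+1) * R.coeff (M-k)) := by
      intro k hk
      have hkM : k ≤ M := by simpa [Nat.lt_succ_iff] using hk
      rw [polar_coeff]
      rw [← choose_eq1 M k hkM, ← choose_eq2 M k hkM]
      ring
    rw [Finset.sum_congr rfl e2, Finset.sum_add_distrib, hA, hB, ← Finset.mul_sum]
  rw [hL, hR']

lemma apol_symm (m : ℕ) (P Q : Polynomial ℂ) : apol m P Q = (-1:ℂ)^m * apol m Q P := by
  simp only [apol]
  rw [Finset.mul_sum]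
  rw [← Finset.sum_range_reflect (fun k => (-1:ℂ)^k * ((m.choose k : ℂ))⁻¹ * P.coeff k
    * Q.coeff (m-k)) (m+1)]
  apply Finset.sum_congr rfl
  intro k hk
  have hkm : k ≤ m := by simpa [Nat.lt_succ_iff] using hk
  have h1 : m + 1 - 1 - k = m - k := by omega
  have h2 : m - (m - k) = k := by omega
  have h3 : m.choose (m - k) = m.choose k := Nat.choose_symm hkm
  have hs : (-1:ℂ)^(m-k) = (-1:ℂ)^m * (-1:ℂ)^k := by
    have e1 : (-1:ℂ)^(m-k) * (-1:ℂ)^k = (-1:ℂ)^m := by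
      rw [← pow_add]
      congr 1
      omega
    have e2 : (-1:ℂ)^k * (-1:ℂ)^k = 1 := by
      rw [← pow_add, ← two_mul, pow_mul]
      norm_num
    calc (-1:ℂ)^(m-k) = (-1:ℂ)^(m-k) * ((-1:ℂ)^k * (-1:ℂ)^k) := by rw [e2, mul_one]
      _ = ((-1:ℂ)^(m-k) * (-1:ℂ)^k) * (-1:ℂ)^k := by ring
      _ = (-1:ℂ)^m * (-1:ℂ)^k := by rw [e1]
  simp only [h1, h2, h3, hs]
  ring

lemma multiset_esymm_one (s : Multiset ℂ) : s.esymm 1 = s.sum := by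
  rw [Multiset.esymm, Multiset.powersetCard_one, Multiset.map_map]
  simp [Function.comp]


lemma grace (α γ : ℝ) (β : ℂ) (b : Bool) (hα : 0 ≤ α) :
    ∀ m : ℕ, 1 ≤ m → ∀ P Q : Polynomial ℂ, P.natDegree = m → Q.natDegree = m →
    (∀ z, P.IsRoot z → ltb b (hfun α β γ z)) →
    (∀ z, Q.IsRoot z → ¬ ltb b (hfun α β γ z)) →
    apol m P Q ≠ 0 := by
  intro m
  induction m with
  | zero => omega
  | succ M IH =>
    intro _ P Q hPdeg hQdeg hPK hQK
    have hQ0 : Q ≠ 0 := by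
      intro h
      rw [h, natDegree_zero] at hQdeg
      omega
    have hP0 : P ≠ 0 := by
      intro h
      rw [h, natDegree_zero] at hPdeg
      omega
    obtain ⟨ζ, hζ⟩ : ∃ z, Q.IsRoot z := by
      apply Complex.exists_root
      have : 0 < Q.natDegree := by omega
      exact natDegree_pos_iff_degree_pos.mp this
    obtain ⟨R, hRQ⟩ := dvd_iff_isRoot.mpr hζ
    have hR0 : R ≠ 0 := by
      rintro rfl
      rw [mul_zero] at hRQ
      exact hQ0 hRQ
    have hXz : (X - C ζ : Polynomial ℂ) ≠ 0 := X_sub_C_ne_zero ζ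
    have hRdeg : R.natDegree = M := by
      have h1 := natDegree_mul hXz hR0
      rw [← hRQ, hQdeg, natDegree_X_sub_C] at h1
      omega
    have hRroots : ∀ z, R.IsRoot z → ¬ ltb b (hfun α β γ z) := by
      intro z hz
      apply hQK
      rw [hRQ]
      simp [IsRoot.def, eval_mul, hz.eq_zero]
    have hζK : ¬ ltb b (hfun α β γ ζ) := hQK ζ hζ
    have hsplits : Multiset.card P.roots = P.natDegree :=
      splits_iff_card_roots.mp (IsAlgClosed.splits P)
    have hfact := C_leadingCoeff_mul_prod_multiset_X_sub_C hsplits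
    have hlead : P.leadingCoeff ≠ 0 := leadingCoeff_ne_zero.mpr hP0
    have hrootsK : ∀ z ∈ P.roots, ltb b (hfun α β γ z) := fun z hz =>
      hPK z (isRoot_of_mem_roots hz)
    have hcard : Multiset.card P.roots = M + 1 := by rw [hsplits, hPdeg]
    have hroots0 : P.roots ≠ 0 := by
      intro h
      rw [h] at hcard
      simp at hcard
    set Pz := C (((M+1):ℕ):ℂ) * P + (C ζ - X) * Polynomial.derivative P with hPzdef
    have hMc : (((M+1):ℕ):ℂ) ≠ 0 := Nat.cast_ne_zero.mpr (Nat.succ_ne_zero M)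
    -- Laguerre step: all roots of Pz lie in the domain
    have hLag : ∀ w, Pz.IsRoot w → ltb b (hfun α β γ w) := by
      intro w hwroot
      by_contra hwK
      have hPwne : Polynomial.eval w P ≠ 0 := fun h0 => hwK (hPK w h0)
      have hz_ne : ∀ z ∈ P.roots, z ≠ w := by
        intro z hz hzw
        apply hPwne
        rw [← hzw]
        exact isRoot_of_mem_roots hz
      have hPw : Polynomial.eval w P
          = P.leadingCoeff * Polynomial.eval w ((P.roots.map (fun z => X - C z)).prod) := by
        conv_lhs => rw [← hfact]
        rw [eval_mul, eval_C]
      have hd : Polynomial.eval w (Polynomial.derivative P)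
          = Polynomial.eval w P * (P.roots.map (fun z => (w - z)⁻¹)).sum := by
        conv_lhs => rw [← hfact]
        rw [derivative_C_mul, eval_mul, eval_C, eval_derivative_msprod w P.roots hz_ne, hPw]
        ring
      have heval : Polynomial.eval w Pz = 0 := hwroot
      rw [hPzdef] at heval
      simp only [eval_add, eval_mul, eval_C, eval_sub, eval_X] at heval
      rw [hd] at heval
      set S := (P.roots.map (fun z => (w - z)⁻¹)).sum with hS
      have heq2 : (((M+1):ℕ):ℂ) = (w - ζ) * S := by
        have h6 : Polynomial.eval w P * ((((M+1):ℕ):ℂ) - (w - ζ) * S) = 0 := by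
          linear_combination heval
        rcases mul_eq_zero.mp h6 with h7 | h7
        · exact absurd h7 hPwne
        · linear_combination h7
      have hconv := conv_lemma α γ β b w ζ hwK P.roots hroots0
        (fun z hz => ⟨hz_ne z hz, hrootsK z hz⟩)
        (by rw [hcard]; exact heq2)
      exact hζK hconv
    -- leading coefficient of Pz
    have hpM1 : P.coeff (M+1) = P.leadingCoeff := by
      rw [← hPdeg]
      rfl
    have hpM : P.coeff M = P.leadingCoeff * (-1) * P.roots.sum := by
      have h8 := Polynomial.coeff_eq_esymm_roots_of_card hsplits
        (show M ≤ P.natDegree by omega)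
      rw [hPdeg] at h8
      have h9 : M + 1 - M = 1 := by omega
      rw [h9, multiset_esymm_one] at h8
      rw [h8]
      ring
    have hPzcoeffM : Pz.coeff M = P.leadingCoeff * ((((M+1):ℕ):ℂ) * ζ - P.roots.sum) := by
      rw [hPzdef, polar_coeff, hpM1, hpM]
      push_cast
      ring
    have hPzcne : Pz.coeff M ≠ 0 := by
      rw [hPzcoeffM]
      apply mul_ne_zero hlead
      intro h0
      have hζeq : ζ = ((((M+1):ℕ)):ℂ)⁻¹ * P.roots.sum := by
        rw [eq_inv_mul_iff_mul_eq₀ hMc]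
        linear_combination h0
      have hsumlt : ltb b ((P.roots.map (hfun α β γ)).sum) := by
        apply ltb_sum
        · rw [Ne, Multiset.map_eq_zero]
          exact hroots0
        · intro x hx
          obtain ⟨z, hz, rfl⟩ := Multiset.mem_map.mp hx
          exact hrootsK z hz
      have hj := jensen α hα β γ P.roots hroots0
      rw [hcard, ← hζeq] at hj
      have h10 := ltb_of_le hj hsumlt
      have h11 : ltb b (hfun α β γ ζ) := by
        apply ltb_of_mul_pos _ h10
        exact Nat.cast_pos.mpr (Nat.succ_pos M)
      exact hζK h11
    have hPzdegle : Pz.natDegree ≤ M := by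
      rw [natDegree_le_iff_coeff_eq_zero]
      intro N hN
      rw [hPzdef, polar_coeff]
      rcases eq_or_lt_of_le (show M + 1 ≤ N from hN) with hNeq | hNgt
      · rw [← hNeq]
        have hc1 : P.coeff (M + 1 + 1) = 0 := by
          apply coeff_eq_zero_of_natDegree_lt
          omega
        rw [hc1]
        push_cast
        ring
      · have hc1 : P.coeff N = 0 := coeff_eq_zero_of_natDegree_lt (by omega)
        have hc2 : P.coeff (N + 1) = 0 := coeff_eq_zero_of_natDegree_lt (by omega)
        rw [hc1, hc2]
        ring
    have hPzdeg : Pz.natDegree = M := le_antisymm hPzdegle (le_natDegree_of_ne_zero hPzcne)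
    rw [hRQ, apol_reduce M P R ζ
      (fun j hj => coeff_eq_zero_of_natDegree_lt (by omega))]
    apply mul_ne_zero (inv_ne_zero hMc)
    rcases Nat.eq_zero_or_pos M with hM0 | hMpos
    · subst hM0
      rw [← hPzdef]
      simp only [apol, zero_add, Finset.range_one, Finset.sum_singleton, Nat.choose_self,
        pow_zero, Nat.cast_one, inv_one, one_mul, Nat.sub_zero, Nat.sub_self]
      apply mul_ne_zero
      · exact hPzcne
      · have : R.coeff 0 = R.leadingCoeff := by rw [← hRdeg]; rfl
        rw [this]
        exact leadingCoeff_ne_zero.mpr hR0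
    · exact IH hMpos Pz R hPzdeg hRdeg hLag hRroots

lemma hfun_neg (α γ : ℝ) (β : ℂ) (z : ℂ) :
    hfun (-α) (-β) (-γ) z = -(hfun α β γ z) := by
  simp only [hfun, map_neg, neg_mul, Complex.neg_re]
  ring

lemma grace_app (α γ : ℝ) (β : ℂ) (b : Bool) (m : ℕ) (hm : 1 ≤ m) (P Q : Polynomial ℂ)
    (hP : P.natDegree = m) (hQ : Q.natDegree = m)
    (hPr : ∀ z, P.IsRoot z → ¬ ltb b (hfun α β γ z))
    (hQr : ∀ z, Q.IsRoot z → ltb b (hfun α β γ z)) :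
    apol m P Q ≠ 0 := by
  rcases le_or_gt α 0 with hα | hα
  · apply grace (-α) (-γ) (-β) (!b) (by linarith) m hm P Q hP hQ
    · intro z hz
      have h1 := hPr z hz
      rw [not_ltb_iff] at h1
      rwa [hfun_neg]
    · intro z hz
      have h2 := hQr z hz
      rw [hfun_neg]
      intro hcontra
      rw [← not_ltb_iff] at hcontra
      exact hcontra h2
  · have h := grace α γ β b hα.le m hm Q P hQ hP hQr hPr
    rw [apol_symm]
    exact mul_ne_zero (pow_ne_zero m (by norm_num)) h

end walshAux

/-- Generalized Walsh theorem, part 2. -/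
theorem stmt_11 (D : Set ℂ) (hD : IsCircularDomain D)
    (d : ℕ) (hd : 1 ≤ d) (q : Polynomial ℂ) (hq : q.Monic) (hqd : q.natDegree = d)
    (n : ℕ) (hn : 1 ≤ n)
    (f : Polynomial ℂ) (hf : f.natDegree = n)
    (hnv : ∀ u ∈ (fun w => q.eval w) '' D, f.eval u ≠ 0)
    (T : Polynomial ℂ) (hTdeg : T.degree ≤ (n : ℕ))
    (hT : ∀ u : ℂ, T.eval u = apol (n * d) (f.comp q) ((q - Polynomial.C u) ^ n)) :
    (∀ z ∈ innerImage q D, T.eval z ≠ 0) ∧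
    (∀ u : Fin n → ℂ, (∀ k, u k ∈ innerImage q D) → Sfun q n f u ≠ 0) := by
  obtain ⟨α, γ', β, hDor⟩ := hD
  have hmemex : ∃ b : Bool, ∀ z : ℂ, z ∈ D ↔ ltb b (hfun α β γ' z) := by
    rcases hDor with h | h
    · exact ⟨true, fun z => by rw [h]; simp [ltb, hfun, Set.mem_setOf_eq]⟩
    · exact ⟨false, fun z => by rw [h]; simp [ltb, hfun, Set.mem_setOf_eq]⟩
  obtain ⟨b, hmem⟩ := hmemex
  have main : ∀ u : Fin n → ℂ, (∀ k, u k ∈ innerImage q D) → Sfun q n f u ≠ 0 := by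
    intro u hu
    have hm : 1 ≤ n * d := by
      have := Nat.mul_le_mul hn hd
      simpa using this
    have hPdeg : (f.comp q).natDegree = n * d := by rw [natDegree_comp, hf, hqd]
    have hfac_ne : ∀ j : Fin n, (q - C (u j)) ≠ 0 := by
      intro j h0
      have h1 : (q - C (u j)).natDegree = d := by rw [natDegree_sub_C, hqd]
      rw [h0, natDegree_zero] at h1
      omega
    have hQdeg : (∏ j : Fin n, (q - C (u j))).natDegree = n * d := by
      rw [natDegree_prod _ _ (fun j _ => hfac_ne j)]
      simp [natDegree_sub_C, hqd, Finset.sum_const, Finset.card_univ, mul_comm]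
    have hProots : ∀ z, (f.comp q).IsRoot z → ¬ ltb b (hfun α β γ' z) := by
      intro z hz hzK
      have h1 : Polynomial.eval z (f.comp q) = 0 := hz
      rw [eval_comp] at h1
      have hzD : z ∈ D := (hmem z).mpr hzK
      exact hnv (q.eval z) ⟨z, hzD, rfl⟩ h1
    have hQroots : ∀ z, (∏ j : Fin n, (q - C (u j))).IsRoot z → ltb b (hfun α β γ' z) := by
      intro z hz
      have h1 : Polynomial.eval z (∏ j : Fin n, (q - C (u j))) = 0 := hz
      rw [eval_prod] at h1
      obtain ⟨j, _, hj⟩ := Finset.prod_eq_zero_iff.mp h1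
      rw [eval_sub, eval_C, sub_eq_zero] at hj
      exact (hmem z).mp (hu j z hj)
    have hne := grace_app α γ' β b (n * d) hm (f.comp q) (∏ j : Fin n, (q - C (u j)))
      hPdeg hQdeg hProots hQroots
    simp only [Sfun, hqd]
    exact hne
  refine ⟨?_, main⟩
  intro z hz
  rw [hT z]
  have h2 := main (fun _ => z) (fun _ => hz)
  simp only [Sfun, hqd] at h2
  have h3 : (∏ _j : Fin n, (q - C z)) = (q - C z) ^ n := by
    simp [Finset.prod_const, Finset.card_univ]
  rw [h3] at h2
  exact h2
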